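/- Let F be a nonconstant polynomial over F_{q^n} that is a minimal value set polynomial with value set V_F = F_q (i.e., #V_F = ⌊(q^n − 1)/deg F⌋ + 1 and {F(α) : α ∈ F_{q^n}} = F_q). Then for every γ ∈ F_q, a root β (in the algebraic closure) of F(x) − γ = 0 lies outside F_{q^n} if and only if its multiplicity is divisible by p. -/

import Mathlib

open Polynomial

/-- The number of solutions of `y^q = y` in a finite field containing `𝔽_q`. -/
lemma aux_count (p e n : ℕ) [Fact p.Prime] (he : 0 < e) (hn : 0 < n)
    (q : ℕ) (hq : q = p ^ e)
    (K : Type*) [Field K] [Fintype K] (hcard : Fintype.card K = q ^ n) (hchar : CharP K p) :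
    Set.ncard {y : K | y ^ q = y} = q := by
  classical
  have hp2 : 2 ≤ p := (Fact.out : p.Prime).two_le
  have hq1 : 1 < q := by rw [hq]; exact Nat.one_lt_pow (by omega) (by omega)
  have hqn1 : 1 < q ^ n := Nat.one_lt_pow (by omega) (by omega)
  have hpq : p ∣ q := by rw [hq]; exact dvd_pow_self p (by omega)
  have hqK : ((q : K)) = 0 := (CharP.cast_eq_zero_iff K p q).mpr hpq
  set Pq : K[X] := X ^ q - X with hPq
  set S : K[X] := X ^ (q ^ n) - X with hS
  have hPqne : Pq ≠ 0 := FiniteField.X_pow_card_sub_X_ne_zero K hq1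
  have hSne : S ≠ 0 := FiniteField.X_pow_card_sub_X_ne_zero K hqn1
  have hPqdeg : Pq.natDegree = q := FiniteField.X_pow_card_sub_X_natDegree_eq K hq1
  -- Pq divides S
  have hdvd : Pq ∣ S := by
    have h1 : (q - 1) ∣ (q ^ n - 1) := by
      have := Nat.sub_dvd_pow_sub_pow q 1 n
      simpa using this
    obtain ⟨k, hk⟩ := h1
    have h2 : (X : K[X]) ^ (q - 1) - 1 ∣ X ^ (q ^ n - 1) - 1 := by
      have := sub_dvd_pow_sub_pow ((X : K[X]) ^ (q - 1)) 1 k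
      rwa [← pow_mul, one_pow, ← hk] at this
    have h3 : Pq = X * (X ^ (q - 1) - 1) := by
      have hq' : q - 1 + 1 = q := by omega
      rw [hPq, mul_sub, mul_one, ← pow_succ', hq']
    have h4 : S = X * (X ^ (q ^ n - 1) - 1) := by
      have hq' : q ^ n - 1 + 1 = q ^ n := by omega
      rw [hS, mul_sub, mul_one, ← pow_succ', hq']
    rw [h3, h4]
    exact mul_dvd_mul_left _ h2
  have hrootsS : S.roots = Finset.univ.val := by
    have := FiniteField.roots_X_pow_card_sub_X K
    rwa [hcard] at this
  have hsplitsS : S.Splits := by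
    rw [splits_iff_card_roots, hrootsS, FiniteField.X_pow_card_sub_X_natDegree_eq K hqn1, ← hcard]
    exact Finset.card_univ
  have hsplits : Pq.Splits := Splits.of_dvd hsplitsS hSne hdvd
  have hder : derivative Pq = -1 := by
    rw [hPq, derivative_sub, derivative_X_pow, derivative_X, hqK, C_0]
    ring
  have hsep : Pq.Separable := by
    rw [Polynomial.separable_def, hder]
    exact isCoprime_one_right.neg_right
  have hnodup : Pq.roots.Nodup := nodup_roots hsep
  have hcardroots : Pq.roots.card = q := by
    rw [splits_iff_card_roots] at hsplits
    rw [hsplits, hPqdeg]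
  have hset : {y : K | y ^ q = y} = ↑Pq.roots.toFinset := by
    ext y
    simp only [Set.mem_setOf_eq, Finset.coe_sort_coe, Multiset.mem_toFinset, Finset.mem_coe,
      mem_roots hPqne, hPq, mem_roots (show (X ^ q - X : K[X]) ≠ 0 from hPqne), IsRoot.def, eval_sub, eval_pow, eval_X, sub_eq_zero]
  rw [hset, Set.ncard_coe_finset, Multiset.toFinset_card_of_nodup hnodup, hcardroots]



/-- if `F` is a nonconstant minimal value set polynomial over `𝔽_{q^n}`
(`#V_F = ⌊(q^n−1)/deg F⌋ + 1`) with value set `V_F = 𝔽_q = {y : y^q = y}`, then for each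
`γ ∈ 𝔽_q`, a root `β` (in the algebraic closure) of `F(x) − γ` lies outside `𝔽_{q^n}`
iff its multiplicity is divisible by `p`. -/
theorem stmt_2 (p e n : ℕ) [Fact p.Prime] (he : 0 < e) (hn : 2 ≤ n)
    (q : ℕ) (hq : q = p ^ e)
    (K : Type*) [Field K] [Fintype K] (hcard : Fintype.card K = q ^ n) (hchar : CharP K p)
    (F : Polynomial K) (hF : 0 < F.natDegree)
    (hV : {y : K | ∃ α : K, F.eval α = y} = {y : K | y ^ q = y})
    (hmin : Set.ncard {y : K | ∃ α : K, F.eval α = y} = (q ^ n - 1) / F.natDegree + 1)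
    (γ : K) (hγ : γ ^ q = γ)
    (β : AlgebraicClosure K)
    (hβ : (Polynomial.map (algebraMap K (AlgebraicClosure K)) F
        - Polynomial.C ((algebraMap K (AlgebraicClosure K)) γ)).IsRoot β) :
    β ∉ Set.range (algebraMap K (AlgebraicClosure K)) ↔
      p ∣ (Polynomial.map (algebraMap K (AlgebraicClosure K)) F
        - Polynomial.C ((algebraMap K (AlgebraicClosure K)) γ)).rootMultiplicity β := by
  classical
  have hp2 : 2 ≤ p := (Fact.out : p.Prime).two_le
  have hq1 : 1 < q := by rw [hq]; exact Nat.one_lt_pow (by omega) (by omega)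
  have hqn1 : 1 < q ^ n := Nat.one_lt_pow (by omega) (by omega)
  have hpq : p ∣ q := by rw [hq]; exact dvd_pow_self p (by omega)
  have hqK : ((q : K)) = 0 := (CharP.cast_eq_zero_iff K p q).mpr hpq
  have hqnK : ((q ^ n : ℕ) : K) = 0 := by
    rw [Nat.cast_pow, hqK, zero_pow (by omega)]
  set d := F.natDegree with hdd
  -- degree bounds from minimality
  have hcount : Set.ncard {y : K | y ^ q = y} = q :=
    aux_count p e n he (by omega) q hq K hcard hchar
  rw [hV, hcount] at hmin
  have hdivd : (q ^ n - 1) / d = q - 1 := by omega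
  have hdlow : d * (q - 1) ≤ q ^ n - 1 := by
    have := (Nat.le_div_iff_mul_le hF).mp (le_of_eq hdivd.symm)
    linarith [this]
  have hqd_le : q * d ≤ q ^ n - 1 + d := by nlinarith [hdlow]
  have hd_le : d ≤ q ^ n - 1 := by nlinarith [hdlow]
  -- F^q - F is divisible by S = X^(q^n) - X
  set S : K[X] := X ^ (q ^ n) - X with hS
  set P : K[X] := F ^ q - F with hP
  have hSne : S ≠ 0 := FiniteField.X_pow_card_sub_X_ne_zero K hqn1
  have hSdeg : S.natDegree = q ^ n := FiniteField.X_pow_card_sub_X_natDegree_eq K hqn1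
  have hPeval : ∀ α : K, P.eval α = 0 := by
    intro α
    have hmem : F.eval α ∈ {y : K | y ^ q = y} := by
      rw [← hV]; exact ⟨α, rfl⟩
    simp only [Set.mem_setOf_eq] at hmem
    simp [hP, hmem]
  have hSprod : S = ∏ a : K, (X - C a) := by
    have hmonic : S.Monic := by
      apply monic_X_pow_sub
      rw [degree_X]
      exact_mod_cast hqn1
    have hrootsS : S.roots = Finset.univ.val := by
      have := FiniteField.roots_X_pow_card_sub_X K
      rwa [hcard] at this
    have hsplitsS : S.Splits := by
      rw [splits_iff_card_roots, hrootsS, hSdeg, ← hcard]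
      exact Finset.card_univ
    have := hsplitsS.eq_prod_roots_of_monic hmonic
    rw [hrootsS] at this
    rw [this, Finset.prod_eq_multiset_prod]
  have hSdvd : S ∣ P := by
    rw [hSprod]
    apply Finset.prod_dvd_of_coprime
    · exact (pairwise_coprime_X_sub_C Function.injective_id).set_pairwise _
    · intro a _
      exact dvd_iff_isRoot.mpr (hPeval a)
  obtain ⟨G, hG⟩ := hSdvd
  -- degrees
  have hPdeg : P.natDegree = q * d := by
    rw [hP]
    rw [natDegree_sub_eq_left_of_natDegree_lt, natDegree_pow]
    rw [natDegree_pow]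
    calc F.natDegree = 1 * d := (one_mul d).symm
    _ < q * d := (Nat.mul_lt_mul_right hF).mpr hq1
  have hPne : P ≠ 0 := by
    intro h
    rw [h, natDegree_zero] at hPdeg
    nlinarith
  have hGne : G ≠ 0 := by
    intro h
    rw [h, mul_zero] at hG
    exact hPne hG
  have hGdeg : q * d = q ^ n + G.natDegree := by
    rw [← hSdeg, ← natDegree_mul hSne hGne, ← hG, hPdeg]
  have hGdeg_le : G.natDegree ≤ d - 1 := by omega
  -- derivative computations
  have hderivP : derivative P = -derivative F := by
    rw [hP, derivative_sub, derivative_pow, hqK, C_0]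
    ring
  have hderivS : derivative S = -1 := by
    rw [hS, derivative_sub, derivative_X_pow, derivative_X, hqnK, C_0]
    ring
  have hkey : G - derivative F = S * derivative G := by
    have h1 : derivative P = derivative S * G + S * derivative G := by
      rw [hG, derivative_mul]
    rw [hderivP, hderivS] at h1
    linear_combination h1
  have hG' : derivative G = 0 := by
    by_contra h
    have h1 : (S * derivative G).natDegree = q ^ n + (derivative G).natDegree := by
      rw [natDegree_mul hSne h, hSdeg]
    have h2 : (G - derivative F).natDegree ≤ d - 1 := by
      apply le_trans (natDegree_sub_le _ _)
      apply max_le hGdeg_le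
      apply le_trans (natDegree_derivative_le F) (by omega)
    rw [hkey, h1] at h2
    omega
  have hFG : G = derivative F := by
    have := hkey
    rw [hG', mul_zero, sub_eq_zero] at this
    exact this
  -- move to the algebraic closure
  set φ := algebraMap K (AlgebraicClosure K) with hφ
  set f := F.map φ with hf
  set c := φ γ with hc
  set u := f - C c with hu
  set s := S.map φ with hs
  set g := G.map φ with hg
  have hgne : g ≠ 0 := by
    rw [hg]
    exact (Polynomial.map_ne_zero_iff φ.injective).mpr hGne
  have hsne : s ≠ 0 := by
    rw [hs]
    exact (Polynomial.map_ne_zero_iff φ.injective).mpr hSne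
  have hderivu : derivative u = g := by
    rw [hu, derivative_sub, derivative_C, sub_zero, hf, derivative_map, ← hFG, ← hg]
  have hune : u ≠ 0 := by
    intro h
    rw [h, derivative_zero] at hderivu
    exact hgne hderivu.symm
  set m := u.rootMultiplicity β with hm
  have hm1 : 1 ≤ m := (rootMultiplicity_pos hune).mpr hβ
  -- u^q - u = s * g
  have hcq : (C c : (AlgebraicClosure K)[X]) ^ q = C c := by
    rw [← map_pow, hc, ← map_pow, hγ]
  have husq : u ^ q - u = s * g := by
    have h1 : u ^ q = f ^ q - C c := by
      rw [hu, hq, sub_pow_char_pow, ← hq, hcq]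
    have h2 : u ^ q - u = f ^ q - f := by
      rw [h1, hu]; ring
    rw [h2]
    have h3 : Polynomial.map φ P = f ^ q - f := by
      rw [hP, Polynomial.map_sub, Polynomial.map_pow, hf]
    rw [← h3, hG, Polynomial.map_mul, hs, hg]
  have husqne : u ^ q - u ≠ 0 := by
    rw [husq]
    exact mul_ne_zero hsne hgne
  -- multiplicity of β in u^q - u is m
  have hfac : u ^ q - u = u * (u ^ (q - 1) - 1) := by
    have hq'' : q - 1 + 1 = q := by omega
    rw [mul_sub, mul_one, ← pow_succ', hq'']
  have hmultsq : (u ^ q - u).rootMultiplicity β = m := by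
    have hne2 : (u ^ (q - 1) - 1 : (AlgebraicClosure K)[X]).eval β ≠ 0 := by
      have h0 : u.eval β = 0 := hβ
      simp [eval_sub, eval_pow, h0, zero_pow (show q - 1 ≠ 0 by omega)]
    rw [hfac, rootMultiplicity_mul (by rw [← hfac]; exact husqne),
      rootMultiplicity_eq_zero hne2, add_zero, hm]
  -- multiplicity of β in s
  have hsderiv : derivative s = -1 := by
    rw [hs, derivative_map, hderivS]
    simp
  have hsmul : s * g ≠ 0 := by rw [← husq]; exact husqne
  have hmult_split : s.rootMultiplicity β + g.rootMultiplicity β = m := by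
    rw [← rootMultiplicity_mul hsmul, ← husq, hmultsq]
  -- factor u at β
  set t : (AlgebraicClosure K)[X] := X - C β with ht
  set v := u /ₘ t ^ m with hv
  have hvu : t ^ m * v = u := by
    rw [ht, hv, hm]
    exact pow_mul_divByMonic_rootMultiplicity_eq u β
  have hvβ : v.eval β ≠ 0 := by
    rw [hv, ht, hm]
    exact eval_divByMonic_pow_rootMultiplicity_ne_zero β hune
  have htpow : t ^ m = t ^ (m - 1) * t := by
    rw [← pow_succ, Nat.sub_add_cancel hm1]
  have hdu : derivative u = t ^ (m - 1) * ((m : (AlgebraicClosure K)[X]) * v + t * derivative v) := by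
    rw [← hvu, derivative_mul, derivative_pow, C_eq_natCast, ht, derivative_X_sub_C]
    rw [← ht, htpow]
    ring
  constructor
  · -- outside the base field → p divides m
    intro hout
    by_contra hpm
    -- multiplicity of β in s is 0
    have hsβ : s.rootMultiplicity β = 0 := by
      apply rootMultiplicity_eq_zero
      intro hroot
      apply hout
      have hsprod' : s = ∏ a : K, (X - C (φ a)) := by
        rw [hs, hSprod, Polynomial.map_prod]
        simp
      rw [hsprod', IsRoot.def, eval_prod] at hroot
      obtain ⟨a, _, ha⟩ := Finset.prod_eq_zero_iff.mp hroot
      simp only [eval_sub, eval_X, eval_C, sub_eq_zero] at ha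
      exact ⟨a, ha.symm⟩
    have hgβ : g.rootMultiplicity β = m := by omega
    -- but multiplicity of derivative is m - 1
    have hwβ : ((m : (AlgebraicClosure K)[X]) * v + t * derivative v).eval β ≠ 0 := by
      have hmL : ((m : AlgebraicClosure K)) ≠ 0 := by
        intro h
        exact hpm ((CharP.cast_eq_zero_iff (AlgebraicClosure K) p m).mp h)
      simp only [eval_add, eval_mul, eval_natCast, ht, eval_sub, eval_X, eval_C, sub_self,
        zero_mul, add_zero]
      exact mul_ne_zero hmL hvβ
    have hcontra : g.rootMultiplicity β = m - 1 := by
      rw [← hderivu, hdu, rootMultiplicity_mul (by rw [← hdu, hderivu]; exact hgne),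
        rootMultiplicity_eq_zero hwβ, add_zero, ht,
        rootMultiplicity_X_sub_C_pow]
    omega
  · -- p divides m → outside the base field
    intro hpm
    intro hin
    obtain ⟨a, ha⟩ := hin
    -- multiplicity of β in s is 1
    have hsroot : s.IsRoot β := by
      rw [hs, IsRoot.def, eval_map, ← ha, hS]
      simp only [eval₂_sub, eval₂_pow, eval₂_X]
      rw [← map_pow, ← map_sub]
      have haa : a ^ q ^ n = a := by
        rw [← hcard]
        exact FiniteField.pow_card a
      rw [haa, sub_self, map_zero]
    have hsβ : s.rootMultiplicity β = 1 := by
      have hpos : 1 ≤ s.rootMultiplicity β := (rootMultiplicity_pos hsne).mpr hsroot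
      have hle : s.rootMultiplicity β ≤ 1 := by
        by_contra hgt
        have h2 : (X - C β) ^ 2 ∣ s :=
          dvd_trans (pow_dvd_pow _ (by omega)) (pow_rootMultiplicity_dvd s β)
        obtain ⟨w, hw⟩ := h2
        have hdvd1 : (X - C β) ∣ derivative s := by
          rw [hw, derivative_mul, derivative_pow, C_eq_natCast, derivative_X_sub_C]
          rw [show (2:ℕ) - 1 = 1 by norm_num, pow_one]
          refine dvd_add ⟨(2 : (AlgebraicClosure K)[X]) * w, by push_cast; ring⟩
            ⟨(X - C β) * derivative w, by ring⟩
        rw [hsderiv] at hdvd1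
        obtain ⟨w2, hw2⟩ := hdvd1
        have := congrArg (eval β) hw2
        simp at this
      omega
    have hgβ : g.rootMultiplicity β = m - 1 := by omega
    -- p ∣ m gives t^m ∣ g, so m ≤ m - 1
    have hmL : ((m : (AlgebraicClosure K)[X])) = 0 := by
      rw [← C_eq_natCast, (CharP.cast_eq_zero_iff (AlgebraicClosure K) p m).mpr hpm, C_0]
    have hdvd_tm : t ^ m ∣ g := by
      refine ⟨derivative v, ?_⟩
      rw [← hderivu, hdu, hmL, htpow]
      ring
    have hfin : m ≤ g.rootMultiplicity β := (le_rootMultiplicity_iff hgne).mpr hdvd_tm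
    omega
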